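/- The map t defined by t(a,b,c,q̄) = (a,−b,c,q̄) if a−b+c < 0 and t(a,b,c,q̄) = (−c,b,−a,q̄) if a−b+c > 0 is an involution on the set of prototypes of discriminant D. -/

import Mathlib

/-- A prototype of discriminant `D`. -/
def IsPrototype (D : ℤ) (P : ℤ × ℤ × ℤ × ℤ) : Prop :=
  P.2.1 ^ 2 - 4 * P.1 * P.2.2.1 = D ∧ 0 < P.1 ∧ P.2.2.1 < 0 ∧
    Int.gcd P.1 (Int.gcd P.2.1 (Int.gcd P.2.2.1 P.2.2.2)) = 1 ∧
    P.1 + P.2.1 + P.2.2.1 < 0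

/-- The map `t` on prototypes: `t(a,b,c,q̄) = (a,−b,c,q̄)` if `a−b+c < 0`, and
`t(a,b,c,q̄) = (−c,b,−a,q̄)` if `a−b+c > 0`. -/
def protoT (P : ℤ × ℤ × ℤ × ℤ) : ℤ × ℤ × ℤ × ℤ :=
  if P.1 - P.2.1 + P.2.2.1 < 0 then
    (P.1, -P.2.1, P.2.2.1, P.2.2.2)
  else
    (-P.2.2.1, P.2.1, -P.1, P.2.2.2)

lemma natGcdLeftComm (x y z : ℕ) : Nat.gcd x (Nat.gcd y z) = Nat.gcd y (Nat.gcd x z) := by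
  rw [← Nat.gcd_assoc, Nat.gcd_comm x, Nat.gcd_assoc]

lemma gcd_swap (a b c q : ℤ) :
    Int.gcd (-c) (Int.gcd b (Int.gcd (-a) q)) = Int.gcd a (Int.gcd b (Int.gcd c q)) := by
  simp only [Int.gcd, Int.natAbs_neg, Int.natAbs_natCast]
  rw [natGcdLeftComm c.natAbs, natGcdLeftComm c.natAbs a.natAbs,
    natGcdLeftComm b.natAbs a.natAbs]

/-- `t` is an involution on the set of prototypes of nonsquare discriminant `D`. -/
theorem protoT_involution (D : ℤ) (hD : 0 < D) (hns : ¬ IsSquare D)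
    (P : ℤ × ℤ × ℤ × ℤ) (hP : IsPrototype D P) :
    IsPrototype D (protoT P) ∧ protoT (protoT P) = P := by
  obtain ⟨a, b, c, q⟩ := P
  obtain ⟨hdisc, ha, hc, hgcd, hsum⟩ := hP
  simp only at hdisc ha hc hgcd hsum
  have hne : a - b + c ≠ 0 := by
    intro h
    apply hns
    have hb : b = a + c := by omega
    refine ⟨a - c, ?_⟩
    rw [← hdisc, hb]; ring
  by_cases h : a - b + c < 0
  · have h2 : a - -b + c < 0 := by omega
    constructor
    · simp only [protoT, h, if_true, IsPrototype]
      refine ⟨by rw [← hdisc]; ring, ha, hc, ?_, by omega⟩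
      simpa [Int.gcd] using hgcd
    · have e : protoT (a, b, c, q) = (a, -b, c, q) := by simp [protoT, h]
      rw [e]
      simp only [protoT]
      rw [if_pos h2]
      simp
  · have h1 : a - b + c > 0 := by omega
    have h2 : ¬ (-c - b + -a < 0) := by omega
    constructor
    · simp only [protoT, h, if_neg, if_false, IsPrototype]
      refine ⟨by rw [← hdisc]; ring, by omega, by omega, ?_, by omega⟩
      rw [gcd_swap]; exact hgcd
    · have e : protoT (a, b, c, q) = (-c, b, -a, q) := by simp [protoT, h]
      rw [e]
      simp only [protoT]
      rw [if_neg h2]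
      simp
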